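/- Let V be a valuation domain with quotient field K and let W₁, W₂ be torsion extensions of V to K(X) with maximal ideals M₁, M₂. If W₁ ∩ K[X] = W₂ ∩ K[X], then W₁ = W₂. Similarly, if M₁ ∩ K[X] = M₂ ∩ K[X], then W₁ = W₂. -/

import Mathlib

/-- `W` is a torsion extension of the valuation domain `V` of `K` to `K(X)`:
`W` lies over `V` and its value group is torsion modulo that of `V`, i.e. for every
nonzero `φ ∈ K(X)` there are `n ≥ 1` and `c ∈ K×` with `n·w(φ) = v(c)`
(written multiplicatively). -/
def IsTorsionExt {K : Type*} [Field K] (V : ValuationSubring K)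
    (W : ValuationSubring (RatFunc K)) : Prop :=
  (∀ x : K, RatFunc.C x ∈ W ↔ x ∈ V) ∧
  ∀ φ : RatFunc K, φ ≠ 0 → ∃ (n : ℕ) (c : K), 0 < n ∧ c ≠ 0 ∧
    W.valuation φ ^ n = W.valuation (RatFunc.C c)

section Aux

variable {K : Type*} [Field K]

private lemma aux_map_ne_zero {f : Polynomial K} (hf : f ≠ 0) :
    algebraMap (Polynomial K) (RatFunc K) f ≠ 0 :=
  RatFunc.algebraMap_ne_zero hf

private lemma aux_ne_zero_of_val_one {W : ValuationSubring (RatFunc K)} {f : Polynomial K}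
    (h : W.valuation (algebraMap (Polynomial K) (RatFunc K) f) = 1) : f ≠ 0 := by
  rintro rfl
  simp at h

/-- valuation of the polynomial `C d⁻¹ * f ^ j`. -/
private lemma aux_val_g (W : ValuationSubring (RatFunc K)) (f : Polynomial K) (d : K) (j : ℕ) :
    W.valuation (algebraMap (Polynomial K) (RatFunc K) (Polynomial.C d⁻¹ * f ^ j)) =
      W.valuation (RatFunc.C d⁻¹) *
        W.valuation (algebraMap (Polynomial K) (RatFunc K) f) ^ j := by
  rw [map_mul, map_mul, map_pow, map_pow, RatFunc.algebraMap_C]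

private lemma aux_Cinv_mul_C (W : ValuationSubring (RatFunc K)) {d : K} (hd : d ≠ 0) :
    W.valuation (RatFunc.C d⁻¹) * W.valuation (RatFunc.C d) = 1 := by
  rw [← map_mul, ← map_mul, inv_mul_cancel₀ hd, map_one, map_one]

/-- From `x * y = 1`, `x ≤ 1`, `y ≤ 1` conclude `y = 1`. -/
private lemma aux_eq_one {Γ : Type*} [LinearOrderedCommGroupWithZero Γ] {x y : Γ}
    (hxy : x * y = 1) (hx : x ≤ 1) (hy : y ≤ 1) : y = 1 := by
  refine le_antisymm hy ?_
  calc (1 : Γ) = x * y := hxy.symm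
    _ ≤ 1 * y := mul_le_mul_left hx y
    _ = y := one_mul y

/-- From `w ^ j = 1`, `j ≠ 0` conclude `w = 1`. -/
private lemma aux_pow_eq_one {Γ : Type*} [LinearOrderedCommGroupWithZero Γ] {w : Γ} {j : ℕ}
    (hj : j ≠ 0) (h : w ^ j = 1) : w = 1 := by
  have h2 : w ^ j = 1 ^ j := by rw [one_pow]; exact h
  exact (pow_left_inj₀ zero_le' zero_le' hj).mp h2

end Aux

section Dir

variable {K : Type*} [Field K] {V : ValuationSubring K}
  {W₁ W₂ : ValuationSubring (RatFunc K)}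

/-- Transfer of constants: `w₁(C x) ≤ 1 ↔ w₂(C x) ≤ 1`. -/
private lemma aux_hK (h₁ : IsTorsionExt V W₁) (h₂ : IsTorsionExt V W₂) (x : K) :
    W₁.valuation (RatFunc.C x) ≤ 1 ↔ W₂.valuation (RatFunc.C x) ≤ 1 := by
  rw [ValuationSubring.valuation_le_one_iff, ValuationSubring.valuation_le_one_iff,
    h₁.1, h₂.1]

/-- If the two valuation rings have the same polynomial members, then any polynomial
with `w₁`-value `1` also has `w₂`-value `1`. -/
private lemma dir_of_mem (h₁ : IsTorsionExt V W₁) (h₂ : IsTorsionExt V W₂)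
    (hmem : ∀ f : Polynomial K, algebraMap (Polynomial K) (RatFunc K) f ∈ W₁ ↔
        algebraMap (Polynomial K) (RatFunc K) f ∈ W₂)
    (f : Polynomial K)
    (hf1 : W₁.valuation (algebraMap (Polynomial K) (RatFunc K) f) = 1) :
    W₂.valuation (algebraMap (Polynomial K) (RatFunc K) f) = 1 := by
  have hf : f ≠ 0 := aux_ne_zero_of_val_one hf1
  set F := algebraMap (Polynomial K) (RatFunc K) f with hF
  -- `F ∈ W₂`
  have hFW₂ : W₂.valuation F ≤ 1 := by
    rw [ValuationSubring.valuation_le_one_iff]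
    exact (hmem f).mp (by rw [← ValuationSubring.valuation_le_one_iff, ← hF, hf1])
  obtain ⟨j, d, hj, hd, hjd⟩ := h₂.2 F (aux_map_ne_zero hf)
  have hj0 : j ≠ 0 := hj.ne'
  -- `w₂ (C d) ≤ 1`
  have hCd2 : W₂.valuation (RatFunc.C d) ≤ 1 := by
    rw [← hjd]
    calc W₂.valuation F ^ j ≤ 1 ^ j :=
      (pow_le_pow_iff_left₀ zero_le' zero_le' hj0).mpr hFW₂
    _ = 1 := one_pow j
  -- hence `w₁ (C d) ≤ 1`
  have hCd1 : W₁.valuation (RatFunc.C d) ≤ 1 := (aux_hK h₁ h₂ d).mpr hCd2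
  -- the polynomial `g = C d⁻¹ * f ^ j` has `w₂ g = 1`, hence `g ∈ W₂ = W₁`-members
  set g : Polynomial K := Polynomial.C d⁻¹ * f ^ j with hg
  have hg2 : W₂.valuation (algebraMap (Polynomial K) (RatFunc K) g) = 1 := by
    rw [hg, aux_val_g, ← hF, hjd, aux_Cinv_mul_C W₂ hd]
  have hg1le : W₁.valuation (algebraMap (Polynomial K) (RatFunc K) g) ≤ 1 := by
    rw [ValuationSubring.valuation_le_one_iff]
    exact (hmem g).mpr (by rw [← ValuationSubring.valuation_le_one_iff, hg2])
  -- deduce `w₁ (C d⁻¹) ≤ 1`, hence `w₂ (C d⁻¹) ≤ 1`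
  have hw1g : W₁.valuation (algebraMap (Polynomial K) (RatFunc K) g) =
      W₁.valuation (RatFunc.C d⁻¹) := by
    rw [hg, aux_val_g, ← hF, hf1, one_pow, mul_one]
  have hCdi1 : W₁.valuation (RatFunc.C d⁻¹) ≤ 1 := by rw [← hw1g]; exact hg1le
  have hCdi2 : W₂.valuation (RatFunc.C d⁻¹) ≤ 1 := (aux_hK h₁ h₂ d⁻¹).mp hCdi1
  -- thus `w₂ (C d) = 1`, so `w₂ F ^ j = 1`, so `w₂ F = 1`
  have hCd2eq : W₂.valuation (RatFunc.C d) = 1 :=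
    aux_eq_one (aux_Cinv_mul_C W₂ hd) hCdi2 hCd2
  exact aux_pow_eq_one hj0 (by rw [hjd, hCd2eq])

/-- Same conclusion from equality of the maximal-ideal traces. -/
private lemma dir_of_lt (h₁ : IsTorsionExt V W₁) (h₂ : IsTorsionExt V W₂)
    (hlt : ∀ f : Polynomial K,
        W₁.valuation (algebraMap (Polynomial K) (RatFunc K) f) < 1 ↔
        W₂.valuation (algebraMap (Polynomial K) (RatFunc K) f) < 1)
    (f : Polynomial K)
    (hf1 : W₁.valuation (algebraMap (Polynomial K) (RatFunc K) f) = 1) :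
    W₂.valuation (algebraMap (Polynomial K) (RatFunc K) f) = 1 := by
  have hf : f ≠ 0 := aux_ne_zero_of_val_one hf1
  set F := algebraMap (Polynomial K) (RatFunc K) f with hF
  have hFW₂ : 1 ≤ W₂.valuation F := by
    have := (not_iff_not.mpr (hlt f)).mp (by rw [← hF, hf1]; exact lt_irrefl 1)
    rw [← hF] at this
    exact not_lt.mp this
  obtain ⟨j, d, hj, hd, hjd⟩ := h₂.2 F (aux_map_ne_zero hf)
  have hj0 : j ≠ 0 := hj.ne'
  have hCd2 : 1 ≤ W₂.valuation (RatFunc.C d) := by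
    rw [← hjd]
    calc (1 : W₂.ValueGroup) = 1 ^ j := (one_pow j).symm
    _ ≤ W₂.valuation F ^ j := (pow_le_pow_iff_left₀ zero_le' zero_le' hj0).mpr hFW₂
  set g : Polynomial K := Polynomial.C d⁻¹ * f ^ j with hg
  have hg2 : W₂.valuation (algebraMap (Polynomial K) (RatFunc K) g) = 1 := by
    rw [hg, aux_val_g, ← hF, hjd, aux_Cinv_mul_C W₂ hd]
  have hg1ge : 1 ≤ W₁.valuation (algebraMap (Polynomial K) (RatFunc K) g) := by
    have := (not_iff_not.mpr (hlt g)).mpr (by rw [hg2]; exact lt_irrefl 1)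
    exact not_lt.mp this
  have hw1g : W₁.valuation (algebraMap (Polynomial K) (RatFunc K) g) =
      W₁.valuation (RatFunc.C d⁻¹) := by
    rw [hg, aux_val_g, ← hF, hf1, one_pow, mul_one]
  have hCdi1 : 1 ≤ W₁.valuation (RatFunc.C d⁻¹) := by rw [← hw1g]; exact hg1ge
  -- from `w₁(C d⁻¹) ≥ 1` and `w₁(C d⁻¹) * w₁(C d) = 1` deduce `w₁(C d) ≤ 1`
  have hCd1 : W₁.valuation (RatFunc.C d) ≤ 1 := by
    calc W₁.valuation (RatFunc.C d) = 1 * W₁.valuation (RatFunc.C d) := (one_mul _).symm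
    _ ≤ W₁.valuation (RatFunc.C d⁻¹) * W₁.valuation (RatFunc.C d) :=
        mul_le_mul_left hCdi1 _
    _ = 1 := aux_Cinv_mul_C W₁ hd
  have hCd2le : W₂.valuation (RatFunc.C d) ≤ 1 := (aux_hK h₁ h₂ d).mp hCd1
  have hCd2eq : W₂.valuation (RatFunc.C d) = 1 := le_antisymm hCd2le hCd2
  exact aux_pow_eq_one hj0 (by rw [hjd, hCd2eq])

end Dir

section Master

variable {K : Type*} [Field K] {V : ValuationSubring K}
  {W₁ W₂ : ValuationSubring (RatFunc K)}

/-- Division transfer for constants. -/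
private lemma aux_div_le (W : ValuationSubring (RatFunc K)) (x : K) {y : K} (hy : y ≠ 0) :
    W.valuation (RatFunc.C (x * y⁻¹)) ≤ 1 ↔
      W.valuation (RatFunc.C x) ≤ W.valuation (RatFunc.C y) := by
  have hCy : W.valuation (RatFunc.C y) ≠ 0 :=
    (Valuation.ne_zero_iff _).mpr (by simpa using hy)
  have hmul : W.valuation (RatFunc.C (x * y⁻¹)) * W.valuation (RatFunc.C y) =
      W.valuation (RatFunc.C x) := by
    rw [← map_mul, ← map_mul, mul_assoc, inv_mul_cancel₀ hy, mul_one]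
  rw [← hmul]
  constructor
  · intro h
    calc W.valuation (RatFunc.C (x * y⁻¹)) * W.valuation (RatFunc.C y)
        ≤ 1 * W.valuation (RatFunc.C y) := mul_le_mul_left h _
      _ = W.valuation (RatFunc.C y) := one_mul _
  · intro h
    refine (mul_le_mul_iff_left₀ (zero_lt_iff.mpr hCy)).mp ?_
    rw [one_mul]
    exact h

/-- The master lemma: both valuation rings agree if every polynomial of `w₁`-value `1`
has `w₂`-value `1`. -/
private lemma master (h₁ : IsTorsionExt V W₁) (h₂ : IsTorsionExt V W₂)
    (H : ∀ f : Polynomial K,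
      W₁.valuation (algebraMap (Polynomial K) (RatFunc K) f) = 1 →
      W₂.valuation (algebraMap (Polynomial K) (RatFunc K) f) = 1) :
    W₁ = W₂ := by
  -- Step 1: common torsion data for both valuations.
  have lemA : ∀ q : Polynomial K, q ≠ 0 → ∃ (m : ℕ) (a : K), m ≠ 0 ∧ a ≠ 0 ∧
      W₁.valuation (algebraMap (Polynomial K) (RatFunc K) q) ^ m =
        W₁.valuation (RatFunc.C a) ∧
      W₂.valuation (algebraMap (Polynomial K) (RatFunc K) q) ^ m =
        W₂.valuation (RatFunc.C a) := by
    intro q hq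
    obtain ⟨k, d, hk, hd, hkd⟩ :=
      h₁.2 (algebraMap (Polynomial K) (RatFunc K) q) (aux_map_ne_zero hq)
    refine ⟨k, d, hk.ne', hd, hkd, ?_⟩
    set g : Polynomial K := Polynomial.C d⁻¹ * q ^ k with hg
    have hg1 : W₁.valuation (algebraMap (Polynomial K) (RatFunc K) g) = 1 := by
      rw [hg, aux_val_g, hkd, aux_Cinv_mul_C W₁ hd]
    have hg2 := H g hg1
    rw [hg, aux_val_g] at hg2
    calc W₂.valuation (algebraMap (Polynomial K) (RatFunc K) q) ^ k
        = (W₂.valuation (RatFunc.C d⁻¹) * W₂.valuation (RatFunc.C d)) *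
            W₂.valuation (algebraMap (Polynomial K) (RatFunc K) q) ^ k := by
          rw [aux_Cinv_mul_C W₂ hd, one_mul]
      _ = W₂.valuation (RatFunc.C d) *
            (W₂.valuation (RatFunc.C d⁻¹) *
              W₂.valuation (algebraMap (Polynomial K) (RatFunc K) q) ^ k) := by
          rw [mul_assoc, mul_left_comm]
      _ = W₂.valuation (RatFunc.C d) := by rw [hg2, mul_one]
  -- Step 2: comparison of valuations of polynomials transfers.
  have compare : ∀ p q : Polynomial K, p ≠ 0 → q ≠ 0 →
      (W₁.valuation (algebraMap (Polynomial K) (RatFunc K) p) ≤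
        W₁.valuation (algebraMap (Polynomial K) (RatFunc K) q) ↔
       W₂.valuation (algebraMap (Polynomial K) (RatFunc K) p) ≤
        W₂.valuation (algebraMap (Polynomial K) (RatFunc K) q)) := by
    intro p q hp hq
    obtain ⟨m, a, hm, ha, h1a, h2a⟩ := lemA p hp
    obtain ⟨m', b, hm', hb, h1b, h2b⟩ := lemA q hq
    have hN : m * m' ≠ 0 := mul_ne_zero hm hm'
    have key : ∀ (W : ValuationSubring (RatFunc K)),
        W.valuation (algebraMap (Polynomial K) (RatFunc K) p) ^ m =
          W.valuation (RatFunc.C a) →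
        W.valuation (algebraMap (Polynomial K) (RatFunc K) q) ^ m' =
          W.valuation (RatFunc.C b) →
        ((W.valuation (algebraMap (Polynomial K) (RatFunc K) p) ≤
          W.valuation (algebraMap (Polynomial K) (RatFunc K) q)) ↔
          W.valuation (RatFunc.C (a ^ m' * (b ^ m)⁻¹)) ≤ 1) := by
      intro W wa wb
      rw [aux_div_le W _ (pow_ne_zero m hb)]
      rw [← (pow_le_pow_iff_left₀ zero_le' zero_le' hN :
        _ ↔ W.valuation (algebraMap (Polynomial K) (RatFunc K) p) ≤ _)]
      rw [pow_mul, wa, pow_mul', wb, ← map_pow, ← map_pow, ← map_pow, ← map_pow]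
    rw [key W₁ h1a h1b, key W₂ h2a h2b, aux_hK h₁ h₂]
  -- Step 3: conclude equality of the valuation subrings.
  ext φ
  rcases eq_or_ne φ 0 with rfl | hφ
  · simp [zero_mem]
  · have hnum : φ.num ≠ 0 := RatFunc.num_ne_zero hφ
    have hden : (φ.denom : Polynomial K) ≠ 0 := φ.denom_ne_zero
    have hmem : ∀ W : ValuationSubring (RatFunc K), φ ∈ W ↔
        W.valuation (algebraMap (Polynomial K) (RatFunc K) φ.num) ≤
        W.valuation (algebraMap (Polynomial K) (RatFunc K) φ.denom) := by
      intro W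
      have hφd : algebraMap (Polynomial K) (RatFunc K) φ.num =
          φ * algebraMap (Polynomial K) (RatFunc K) φ.denom :=
        (div_eq_iff (aux_map_ne_zero hden)).mp (RatFunc.num_div_denom φ)
      have hWd : W.valuation (algebraMap (Polynomial K) (RatFunc K) φ.denom) ≠ 0 :=
        (Valuation.ne_zero_iff _).mpr (aux_map_ne_zero hden)
      rw [← W.valuation_le_one_iff, hφd, map_mul]
      constructor
      · intro h
        calc W.valuation φ * W.valuation (algebraMap (Polynomial K) (RatFunc K) φ.denom)
            ≤ 1 * W.valuation (algebraMap (Polynomial K) (RatFunc K) φ.denom) :=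
              mul_le_mul_left h _
          _ = W.valuation (algebraMap (Polynomial K) (RatFunc K) φ.denom) := one_mul _
      · intro h
        refine (mul_le_mul_iff_left₀ (zero_lt_iff.mpr hWd)).mp ?_
        rw [one_mul]
        exact h
    rw [hmem W₁, hmem W₂, compare _ _ hnum hden]

end Master

/-- Torsion extensions of `V` to `K(X)` are determined by their
intersection with `K[X]`, and also by the intersection of their maximal ideal with
`K[X]` (a polynomial `f` lies in the maximal ideal `Mᵢ` iff `wᵢ(f) < 1`,
multiplicatively). -/
theorem stmt_5 {K : Type*} [Field K] (V : ValuationSubring K)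
    (W₁ W₂ : ValuationSubring (RatFunc K))
    (h₁ : IsTorsionExt V W₁) (h₂ : IsTorsionExt V W₂) :
    ((∀ f : Polynomial K, algebraMap (Polynomial K) (RatFunc K) f ∈ W₁ ↔
        algebraMap (Polynomial K) (RatFunc K) f ∈ W₂) → W₁ = W₂) ∧
    ((∀ f : Polynomial K,
        W₁.valuation (algebraMap (Polynomial K) (RatFunc K) f) < 1 ↔
        W₂.valuation (algebraMap (Polynomial K) (RatFunc K) f) < 1) → W₁ = W₂) := by
  constructor
  · intro hmem
    exact master h₁ h₂ (dir_of_mem h₁ h₂ hmem)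
  · intro hlt
    exact master h₁ h₂ (dir_of_lt h₁ h₂ hlt)
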